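/- Let R be a ring. Define the set of strongly left localizable elements L^s_l(R) = ⋂_{S ∈ max.Den_l(R)} S, the largest strong left denominator set T_l(R) (the largest left denominator set contained in L^s_l(R)), and the strong left localization radical l^s_R = ass(T_l(R)). Then T_l(R) + l^s_R = T_l(R). -/

import Mathlib

/-- A left Ore set in a ring `R`: a multiplicative subset (`1 ∈ S`, `0 ∉ S`,
closed under multiplication) satisfying the left Ore condition. -/
def IsLeftOreSet (R : Type*) [Ring R] (S : Set R) : Prop :=
  (1 : R) ∈ S ∧ (0 : R) ∉ S ∧ (∀ s ∈ S, ∀ t ∈ S, s * t ∈ S) ∧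
    ∀ (r : R), ∀ s ∈ S, ∃ s' ∈ S, ∃ r' : R, s' * r = r' * s

/-- A left denominator set: a left Ore set such that `r * s = 0` implies
`t * r = 0` for some `t ∈ S`. -/
def IsLeftDenSet (R : Type*) [Ring R] (S : Set R) : Prop :=
  IsLeftOreSet R S ∧ ∀ (r : R), ∀ s ∈ S, r * s = 0 → ∃ t ∈ S, t * r = 0

/-- `ass(S) = {r ∈ R | s r = 0 for some s ∈ S}`. -/
def assSet (R : Type*) [Ring R] (S : Set R) : Set R :=
  {r : R | ∃ s ∈ S, s * r = 0}

/-- A maximal left denominator set of `R`. -/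
def IsMaxLeftDenSet (R : Type*) [Ring R] (S : Set R) : Prop :=
  IsLeftDenSet R S ∧ ∀ T : Set R, IsLeftDenSet R T → S ⊆ T → T = S

/-- The set `L^s_l(R)` of strongly left localizable elements: the intersection of
all maximal left denominator sets of `R`. -/
def stronglyLocalizable (R : Type*) [Ring R] : Set R :=
  {r : R | ∀ S : Set R, IsMaxLeftDenSet R S → r ∈ S}

/-- `T_l(R)`: the union of all left denominator sets contained in `L^s_l(R)`
(the largest strong left denominator set). -/
def Tl (R : Type*) [Ring R] : Set R :=
  ⋃₀ {S : Set R | IsLeftDenSet R S ∧ S ⊆ stronglyLocalizable R}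

/-- The left localization radical `l_R = ⋂_{S ∈ max.Den_l(R)} ass(S)`. -/
def lRad (R : Type*) [Ring R] : Set R :=
  {r : R | ∀ S : Set R, IsMaxLeftDenSet R S → r ∈ assSet R S}

/-- `f : R →+* Q` is a left Ore localization of `R` at `S`: elements of `S` become
units, every element of `Q` is of the form `s⁻¹ r`, and `ker f = ass(S)`. -/
def IsLeftLocalization (R : Type*) [Ring R] {Q : Type*} [Ring Q]
    (S : Set R) (f : R →+* Q) : Prop :=
  (∀ s ∈ S, IsUnit (f s)) ∧
  (∀ q : Q, ∃ s ∈ S, ∃ r : R, ∃ u : Qˣ, (u : Q) = f s ∧ q = (↑u⁻¹ : Q) * f r) ∧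
  (∀ r : R, f r = 0 ↔ r ∈ assSet R S)

namespace StmtAux

variable {R : Type*} [Ring R]

lemma zero_mem_ass {S : Set R} (h : IsLeftDenSet R S) : (0 : R) ∈ assSet R S :=
  ⟨1, h.1.1, mul_zero 1⟩

lemma ass_smul {S : Set R} (h : IsLeftDenSet R S) {a : R} (ha : a ∈ assSet R S) (r : R) :
    r * a ∈ assSet R S := by
  obtain ⟨u, hu, hua⟩ := ha
  obtain ⟨s', hs', r', e⟩ := h.1.2.2.2 r u hu
  exact ⟨s', hs', by rw [← mul_assoc, e, mul_assoc, hua, mul_zero]⟩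

lemma ass_mul_right {S : Set R} {a : R} (ha : a ∈ assSet R S) (r : R) :
    a * r ∈ assSet R S := by
  obtain ⟨u, hu, hua⟩ := ha
  exact ⟨u, hu, by rw [← mul_assoc, hua, zero_mul]⟩

lemma ass_add {S : Set R} (h : IsLeftDenSet R S) {a b : R} (ha : a ∈ assSet R S)
    (hb : b ∈ assSet R S) : a + b ∈ assSet R S := by
  obtain ⟨u, hu, hua⟩ := ha
  obtain ⟨v, hv, hvb⟩ := hb
  obtain ⟨w, hw, r', e⟩ := h.1.2.2.2 u v hv
  refine ⟨w * u, h.1.2.2.1 w hw u hu, ?_⟩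
  have : w * u * b = 0 := by rw [e, mul_assoc, hvb, mul_zero]
  rw [mul_add, this, add_zero, mul_assoc, hua, mul_zero]

lemma ass_neg {S : Set R} {a : R} (ha : a ∈ assSet R S) : -a ∈ assSet R S := by
  obtain ⟨u, hu, hua⟩ := ha
  exact ⟨u, hu, by rw [mul_neg, hua, neg_zero]⟩

/-- `S ⊆ S + ass S`. -/
lemma subset_addAss {S : Set R} (h : IsLeftDenSet R S) :
    S ⊆ {x : R | ∃ s ∈ S, ∃ a ∈ assSet R S, x = s + a} :=
  fun s hs => ⟨s, hs, 0, zero_mem_ass h, (add_zero s).symm⟩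

/-- `S + ass S` is a left denominator set. -/
lemma den_addAss {S : Set R} (h : IsLeftDenSet R S) :
    IsLeftDenSet R {x : R | ∃ s ∈ S, ∃ a ∈ assSet R S, x = s + a} := by
  set T := {x : R | ∃ s ∈ S, ∃ a ∈ assSet R S, x = s + a} with hT
  have hST : S ⊆ T := subset_addAss h
  refine ⟨⟨hST h.1.1, ?_, ?_, ?_⟩, ?_⟩
  · rintro ⟨s, hs, a, ⟨u, hu, hua⟩, h0⟩
    have hs' : s = -a := eq_neg_of_add_eq_zero_left h0.symm
    have : u * s = 0 := by rw [hs', mul_neg, hua, neg_zero]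
    have h0S : (0 : R) ∈ S := this ▸ h.1.2.2.1 u hu s hs
    exact h.1.2.1 h0S
  · rintro x ⟨s, hs, a, ha, rfl⟩ y ⟨t, ht, b, hb, rfl⟩
    refine ⟨s * t, h.1.2.2.1 s hs t ht, s * b + (a * t + a * b), ?_, by noncomm_ring⟩
    exact ass_add h (ass_smul h hb s) (ass_add h (ass_mul_right ha t) (ass_mul_right ha b))
  · rintro r x ⟨s, hs, a, ha, rfl⟩
    obtain ⟨s₁, hs₁, r₁, e₁⟩ := h.1.2.2.2 r s hs
    obtain ⟨s₂, hs₂, e₂⟩ := ass_smul h ha r₁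
    refine ⟨s₂ * s₁, hST (h.1.2.2.1 s₂ hs₂ s₁ hs₁), s₂ * r₁, ?_⟩
    have : s₂ * r₁ * (s + a) = s₂ * (r₁ * s) + s₂ * (r₁ * a) := by noncomm_ring
    rw [this, e₂, add_zero, ← e₁, mul_assoc]
  · rintro r x ⟨s, hs, a, ha, rfl⟩ h0
    have hrs : r * s ∈ assSet R S := by
      rw [mul_add] at h0
      rw [eq_neg_of_add_eq_zero_left h0]; exact ass_neg (ass_smul h ha r)
    obtain ⟨u, hu, hu0⟩ := hrs
    have : (u * r) * s = 0 := by rw [mul_assoc]; exact hu0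
    obtain ⟨t, ht, ht0⟩ := h.2 (u * r) s hs this
    exact ⟨t * u, hST (h.1.2.2.1 t ht u hu), by rw [mul_assoc]; exact ht0⟩

/-- Every left denominator set is contained in a maximal one. -/
lemma exists_max {S : Set R} (h : IsLeftDenSet R S) :
    ∃ M, IsMaxLeftDenSet R M ∧ S ⊆ M := by
  have hub : ∀ c ⊆ {T : Set R | IsLeftDenSet R T}, IsChain (· ⊆ ·) c → c.Nonempty →
      ∃ ub ∈ {T : Set R | IsLeftDenSet R T}, ∀ s ∈ c, s ⊆ ub := by
    intro c hc hchain hne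
    obtain ⟨T₀, hT₀⟩ := hne
    refine ⟨⋃₀ c, ⟨⟨⟨T₀, hT₀, (hc hT₀).1.1⟩, ?_, ?_, ?_⟩, ?_⟩,
      fun s hs => Set.subset_sUnion_of_mem hs⟩
    · rintro ⟨T, hT, h0⟩
      exact (hc hT).1.2.1 h0
    · rintro s ⟨T₁, hT₁, hsT⟩ t ⟨T₂, hT₂, htT⟩
      rcases hchain.total hT₁ hT₂ with hle | hle
      · exact ⟨T₂, hT₂, (hc hT₂).1.2.2.1 s (hle hsT) t htT⟩
      · exact ⟨T₁, hT₁, (hc hT₁).1.2.2.1 s hsT t (hle htT)⟩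
    · rintro r s ⟨T, hT, hsT⟩
      obtain ⟨s', hs', r', e⟩ := (hc hT).1.2.2.2 r s hsT
      exact ⟨s', ⟨T, hT, hs'⟩, r', e⟩
    · rintro r s ⟨T, hT, hsT⟩ h0
      obtain ⟨t, ht, e⟩ := (hc hT).2 r s hsT h0
      exact ⟨t, ⟨T, hT, ht⟩, e⟩
  obtain ⟨M, hSM, hM⟩ := zorn_subset_nonempty {T : Set R | IsLeftDenSet R T} hub S h
  exact ⟨M, ⟨hM.prop, fun T hT hMT => Set.Subset.antisymm (hM.2 hT hMT) hMT⟩, hSM⟩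

/-- For a maximal denominator set, `M + ass M = M`. -/
lemma max_add {M : Set R} (hM : IsMaxLeftDenSet R M) {s a : R} (hs : s ∈ M)
    (ha : a ∈ assSet R M) : s + a ∈ M := by
  have hEq := hM.2 _ (den_addAss hM.1) (subset_addAss hM.1)
  exact hEq ▸ ⟨s, hs, a, ha, rfl⟩


/-- The monoid closure of a union of two denominator sets contained in a common
family of maximal denominator sets is again a denominator set. -/
lemma closure_den {S₁ S₂ : Set R} (h₁ : IsLeftDenSet R S₁) (h₂ : IsLeftDenSet R S₂)
    (hmax : ∀ M : Set R, IsMaxLeftDenSet R M → S₁ ⊆ M ∧ S₂ ⊆ M) :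
    IsLeftDenSet R (Submonoid.closure (S₁ ∪ S₂) : Set R) ∧
      ∀ M : Set R, IsMaxLeftDenSet R M → (Submonoid.closure (S₁ ∪ S₂) : Set R) ⊆ M := by
  set C := (Submonoid.closure (S₁ ∪ S₂) : Set R) with hC
  have hsub : ∀ M : Set R, IsMaxLeftDenSet R M → C ⊆ M := by
    intro M hM x hx
    refine Submonoid.closure_induction (motive := fun y _ => y ∈ M) ?_ hM.1.1.1 ?_ hx
    · rintro y (hy | hy)
      · exact (hmax M hM).1 hy
      · exact (hmax M hM).2 hy
    · intro x y _ _ hxM hyM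
      exact hM.1.1.2.2.1 x hxM y hyM
  have ore : ∀ (r : R), ∀ s ∈ C, ∃ s' ∈ C, ∃ r' : R, s' * r = r' * s := by
    intro r s hs
    revert r
    refine Submonoid.closure_induction
      (motive := fun s _ => ∀ r : R, ∃ s' ∈ C, ∃ r' : R, s' * r = r' * s) ?_ ?_ ?_ hs
    · rintro y (hy | hy) r
      · obtain ⟨s', hs', r', e⟩ := h₁.1.2.2.2 r y hy
        exact ⟨s', Submonoid.subset_closure (Or.inl hs'), r', e⟩
      · obtain ⟨s', hs', r', e⟩ := h₂.1.2.2.2 r y hy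
        exact ⟨s', Submonoid.subset_closure (Or.inr hs'), r', e⟩
    · intro r
      exact ⟨1, Submonoid.one_mem _, r, by rw [one_mul, mul_one]⟩
    · intro x y hx hy px py r
      obtain ⟨sb, hsb, rb, eb⟩ := py r
      obtain ⟨sa, hsa, ra, ea⟩ := px rb
      exact ⟨sa * sb, Submonoid.mul_mem _ hsa hsb, ra,
        by rw [mul_assoc, eb, ← mul_assoc, ea, mul_assoc]⟩
  have den : ∀ (r : R), ∀ s ∈ C, r * s = 0 → ∃ t ∈ C, t * r = 0 := by
    intro r s hs
    revert r
    refine Submonoid.closure_induction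
      (motive := fun s _ => ∀ r : R, r * s = 0 → ∃ t ∈ C, t * r = 0) ?_ ?_ ?_ hs
    · rintro y (hy | hy) r h0
      · obtain ⟨t, ht, e⟩ := h₁.2 r y hy h0
        exact ⟨t, Submonoid.subset_closure (Or.inl ht), e⟩
      · obtain ⟨t, ht, e⟩ := h₂.2 r y hy h0
        exact ⟨t, Submonoid.subset_closure (Or.inr ht), e⟩
    · intro r h0
      exact ⟨1, Submonoid.one_mem _, by rw [one_mul]; rwa [mul_one] at h0⟩
    · intro x y hx hy px py r h0
      obtain ⟨t, ht, et⟩ := py (r * x) (by rw [mul_assoc]; exact h0)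
      obtain ⟨t', ht', et'⟩ := px (t * r) (by rw [mul_assoc]; exact et)
      exact ⟨t' * t, Submonoid.mul_mem _ ht' ht, by rw [mul_assoc]; exact et'⟩
  have h0 : (0 : R) ∉ C := by
    obtain ⟨M, hM, _⟩ := exists_max h₁
    intro hc
    exact hM.1.1.2.1 (hsub M hM hc)
  exact ⟨⟨⟨Submonoid.one_mem _, h0, fun s hs t ht => Submonoid.mul_mem _ hs ht, ore⟩, den⟩, hsub⟩

end StmtAux

theorem stmt9 (R : Type*) [Ring R] :
    {x : R | ∃ t ∈ Tl R, ∃ y ∈ assSet R (Tl R), x = t + y} = Tl R := by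
  ext x
  simp only [Set.mem_setOf_eq]
  constructor
  · rintro ⟨t, ht, y, ⟨s, hsT, hsy⟩, rfl⟩
    obtain ⟨S₁, ⟨hS₁, hL₁⟩, htS⟩ := ht
    obtain ⟨S₂, ⟨hS₂, hL₂⟩, hsS⟩ := hsT
    obtain ⟨hCd, hCsub⟩ := StmtAux.closure_den hS₁ hS₂
      (fun M hM => ⟨fun z hz => hL₁ hz M hM, fun z hz => hL₂ hz M hM⟩)
    set C := (Submonoid.closure (S₁ ∪ S₂) : Set R) with hC
    have htC : t ∈ C := Submonoid.subset_closure (Or.inl htS)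
    have hyC : y ∈ assSet R C := ⟨s, Submonoid.subset_closure (Or.inr hsS), hsy⟩
    refine ⟨_, ⟨StmtAux.den_addAss hCd, ?_⟩, ⟨t, htC, y, hyC, rfl⟩⟩
    rintro z ⟨c, hc, a, ⟨u, hu, hua⟩, rfl⟩ M hM
    exact StmtAux.max_add hM (hCsub M hM hc) ⟨u, hCsub M hM hu, hua⟩
  · intro hx
    exact ⟨x, hx, 0, ⟨x, hx, mul_zero x⟩, (add_zero x).symm⟩
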